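/- Equality of LySep and PINN losses at the canonical auxiliary variables (elliptic case; the construction proving Theorem 2.2). If the auxiliary variables are taken to be the canonical ones, a₁ = W₁X+b₁𝟙ᵀ, a₂ = W₂σ(a₁)+b₂𝟙ᵀ, d_{1i} = W₁(:,i)𝟙ᵀ, d_{2i} = W₂(σ'(a₁)*d_{1i}), q_i = W₂(σ''(a₁)*d_{1i}*d_{1i}) for i = 1,…,d, then every penalty term in J^e_S vanishes, the LySep residual K^e*(W₃σ(a₂)+b₃𝟙ᵀ) + Σ_i K^e_i*(W₃(σ'(a₂)*d_{2i})) + K̂^e*Σ_i W₃(σ''(a₂)*d_{2i}*d_{2i}+σ'(a₂)*q_i) − Y equals the PINN residual Σ_{i=1}^d ∂_{x_i}(c·∂_{x_i}ψ_e)(X) − Y, and consequently J^e_S = J^e. -/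

import Mathlib

open scoped BigOperators

noncomputable section

/-- Partial derivative `∂_{x_i} f` at `x`. -/
def pd {m : ℕ} (f : (Fin m → ℝ) → ℝ) (i : Fin m) (x : Fin m → ℝ) : ℝ :=
  fderiv ℝ f x (Pi.single i 1)

/-- Squared Euclidean norm of the `n`-th column of an `M × N` matrix. -/
def colSq {M N : ℕ} (A : Fin M → Fin N → ℝ) (n : Fin N) : ℝ := ∑ j, (A j n) ^ 2

/-- Squared Frobenius norm of an `M × N` matrix. -/
def froSq {M N : ℕ} (A : Fin M → Fin N → ℝ) : ℝ := ∑ n, colSq A n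

/-- Squared Frobenius norm of a row vector (`1 × N` matrix). -/
def vSq {N : ℕ} (v : Fin N → ℝ) : ℝ := ∑ n, (v n) ^ 2

/-- Entrywise sup-norm `|v|_∞` of a row vector. -/
def nsup {N : ℕ} (v : Fin N → ℝ) : ℝ := ⨆ n, |v n|

/-- Weighted squared norm `‖A‖_D²`, where `Dsq n = D(n,n)²` are the squared diagonal
entries of the diagonal weight matrix `D`. -/
def wSq {M N : ℕ} (Dsq : Fin N → ℝ) (A : Fin M → Fin N → ℝ) : ℝ := ∑ n, Dsq n * colSq A n

/-- The constant `C₁ = max{B_{σ'}·max{1,B_{σ'}}, C_{σ'}·max{1,B_{σ'},C_σ}}`. -/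
def constC1 (Cσ Cσ' Bσ' : ℝ) : ℝ :=
  max (Bσ' * max 1 Bσ') (Cσ' * max (max 1 Bσ') Cσ)

/-- The constant `C₂`. -/
def constC2 (Cσ' Cσ'' Bσ' Bσ'' : ℝ) : ℝ :=
  max (Bσ'' * max (max (max (max 1 Bσ') Cσ') (Bσ' ^ 2)) (Bσ' * Cσ'))
    (max 1 Cσ' * max Cσ' (Bσ' * Cσ''))

/-- The constant `C = max{1, 2C_σ², 2C_σ⁴, 5C₁², 14C₂²}`. -/
def constC (Cσ Cσ' Cσ'' Bσ' Bσ'' : ℝ) : ℝ :=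
  max (max (max (max 1 (2 * Cσ ^ 2)) (2 * Cσ ^ 4)) (5 * constC1 Cσ Cσ' Bσ' ^ 2))
    (14 * constC2 Cσ' Cσ'' Bσ' Bσ'' ^ 2)

/-- Data of the elliptic PINN model with a three-layer fully connected network:
activation `σ`, PDE coefficient `c`, feature points `X` (columns `x_n`), data `Y`,
and network parameters `W₁, b₁, W₂, b₂, W₃, b₃`. -/
structure EllData (d M N : ℕ) where
  σ : ℝ → ℝ
  c : (Fin d → ℝ) → ℝ
  X : Fin d → Fin N → ℝ
  Y : Fin N → ℝ
  W1 : Fin M → Fin d → ℝ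
  b1 : Fin M → ℝ
  W2 : Fin M → Fin M → ℝ
  b2 : Fin M → ℝ
  W3 : Fin M → ℝ
  b3 : ℝ

/-- Auxiliary variables of the elliptic LySep model: `a₁, a₂` and, for each `i`,
`d_{1i}, d_{2i}, q_i`, all in `ℝ^{M×N}`. -/
structure EllAux (d M N : ℕ) where
  a1 : Fin M → Fin N → ℝ
  a2 : Fin M → Fin N → ℝ
  d1 : Fin d → Fin M → Fin N → ℝ
  d2 : Fin d → Fin M → Fin N → ℝ
  q  : Fin d → Fin M → Fin N → ℝ

namespace EllData

variable {d M N : ℕ} (P : EllData d M N) (A : EllAux d M N)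

/-- `σ'` -/
def σ' : ℝ → ℝ := deriv P.σ

/-- `σ''` -/
def σ'' : ℝ → ℝ := deriv (deriv P.σ)

/-- the `n`-th feature point `x_n` -/
def x (n : Fin N) : Fin d → ℝ := fun i => P.X i n

/-- the three-layer network `φ(x;θ) = W₃σ(W₂σ(W₁x+b₁)+b₂)+b₃` -/
def phi (y : Fin d → ℝ) : ℝ :=
  (∑ j, P.W3 j * P.σ ((∑ k, P.W2 j k * P.σ ((∑ i, P.W1 k i * y i) + P.b1 k)) + P.b2 j)) + P.b3

/-- `ψ_e(x;θ) = (‖x‖₂² − 1)φ(x;θ)` -/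
def psiE (y : Fin d → ℝ) : ℝ := ((∑ i, (y i) ^ 2) - 1) * P.phi y

/-- the `n`-th entry of the PINN residual `Σ_i ∂_{x_i}(c·∂_{x_i}ψ_e)(X) − Y` -/
def pinnRes (n : Fin N) : ℝ :=
  (∑ i, pd (fun y => P.c y * pd P.psiE i y) i (P.x n)) - P.Y n

/-- the PINN loss `J^e` -/
def Je : ℝ := (1 / (N : ℝ)) * ∑ n, (P.pinnRes n) ^ 2

/-- `c(X)` -/
def cX : Fin N → ℝ := fun n => P.c (P.x n)

/-- `∂_{x_i} c(X)` -/
def dcX (i : Fin d) : Fin N → ℝ := fun n => pd P.c i (P.x n)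

/-- `X̂`, the row vector of `‖x_n‖₂²` -/
def Xhat : Fin N → ℝ := fun n => ∑ i, (P.X i n) ^ 2

/-- `K^e = 2(d·c(X) + Σ_i X(i,:)*∂_{x_i}c(X))` -/
def Ke : Fin N → ℝ := fun n => 2 * ((d : ℝ) * P.cX n + ∑ i, P.X i n * P.dcX i n)

/-- `K̂^e = c(X)*(X̂−1)` -/
def Khat : Fin N → ℝ := fun n => P.cX n * (P.Xhat n - 1)

/-- `K^e_i = 4X(i,:)*c(X) + ∂_{x_i}c(X)*(X̂−1)` -/
def Ki (i : Fin d) : Fin N → ℝ := fun n => 4 * P.X i n * P.cX n + P.dcX i n * (P.Xhat n - 1)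

/-- `‖W₃‖_F²` -/
def w3sq : ℝ := ∑ j, (P.W3 j) ^ 2

/-- `‖W₂‖_F²` -/
def w2sq : ℝ := ∑ j, ∑ k, (P.W2 j k) ^ 2

/-- `‖W₁(:,i)‖₂²` -/
def w1colSq (i : Fin d) : ℝ := ∑ j, (P.W1 j i) ^ 2

/-- the `n`-th entry of the LySep residual
`K^e*(W₃σ(a₂)+b₃𝟙ᵀ) + Σ_i K^e_i*(W₃(σ'(a₂)*d_{2i})) + K̂^e*Σ_i W₃(σ''(a₂)*d_{2i}*d_{2i}+σ'(a₂)*q_i) − Y` -/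
def sRes (n : Fin N) : ℝ :=
  P.Ke n * ((∑ j, P.W3 j * P.σ (A.a2 j n)) + P.b3)
    + (∑ i, P.Ki i n * ∑ j, P.W3 j * (P.σ' (A.a2 j n) * A.d2 i j n))
    + P.Khat n *
        ∑ i, ∑ j, P.W3 j * (P.σ'' (A.a2 j n) * A.d2 i j n * A.d2 i j n + P.σ' (A.a2 j n) * A.q i j n)
    - P.Y n

/-- constraint residual `W₁X + b₁𝟙ᵀ − a₁` -/
def Ra1 : Fin M → Fin N → ℝ := fun j n => (∑ i, P.W1 j i * P.X i n) + P.b1 j - A.a1 j n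

/-- constraint residual `W₂σ(a₁) + b₂𝟙ᵀ − a₂` -/
def Ra2 : Fin M → Fin N → ℝ := fun j n => (∑ k, P.W2 j k * P.σ (A.a1 k n)) + P.b2 j - A.a2 j n

/-- constraint residual `W₁(:,i)𝟙ᵀ − d_{1i}` -/
def Rd1 (i : Fin d) : Fin M → Fin N → ℝ := fun j n => P.W1 j i - A.d1 i j n

/-- constraint residual `W₂(σ'(a₁)*d_{1i}) − d_{2i}` -/
def Rd2 (i : Fin d) : Fin M → Fin N → ℝ :=
  fun j n => (∑ k, P.W2 j k * (P.σ' (A.a1 k n) * A.d1 i k n)) - A.d2 i j n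

/-- constraint residual `W₂(σ''(a₁)*d_{1i}*d_{1i}) − q_i` -/
def Rq (i : Fin d) : Fin M → Fin N → ℝ :=
  fun j n => (∑ k, P.W2 j k * (P.σ'' (A.a1 k n) * A.d1 i k n * A.d1 i k n)) - A.q i j n

/-- `D_{a₂}¹(n,n)²` -/
def Da2_1sq (n : Fin N) : ℝ :=
  nsup P.Ke ^ 2 + ∑ i, (nsup (P.Ki i) ^ 2 * colSq (A.d2 i) n + nsup P.Khat ^ 2 * colSq (A.q i) n)

/-- `D_{a₂}^{2i}(n,n)²` -/
def Da2_2sq (i : Fin d) (n : Fin N) : ℝ := nsup P.Khat ^ 2 * colSq (A.d2 i) n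

/-- `D_{a₁}^{2i}(n,n)²` -/
def Da1_2sq (i : Fin d) (n : Fin N) : ℝ := nsup P.Khat ^ 2 * colSq (A.d1 i) n

/-- `D_{a₁}^{3i}(n,n)²` -/
def Da1_3sq (i : Fin d) (n : Fin N) : ℝ := P.Da1_2sq A i n + P.Da2_2sq A i n

/-- `D_{a₁}¹(n,n)²` -/
def Da1_1sq (n : Fin N) : ℝ :=
  P.Da2_1sq A n + ∑ i, (nsup (P.Ki i) ^ 2 * colSq (A.d1 i) n + P.Da1_2sq A i n * colSq (A.d2 i) n)

/-- `D_{d_{1i}}²(n,n)²` -/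
def Dd1_2sq (i : Fin d) (n : Fin N) : ℝ := nsup (P.Ki i) ^ 2 + P.Da1_3sq A i n

/-- `D_{d_{2i}}¹(n,n)²` -/
def Dd2_1sq (i : Fin d) (n : Fin N) : ℝ := nsup (P.Ki i) ^ 2 + P.Da2_2sq A i n

/-- the LySep loss `J^e_S` with self-adaptive weights `ω` and diagonal matrices `D`:
`ω_{a₁}¹ = ω_{d_{1i}}² = ‖W₃‖²‖W₂‖²`, `ω_{a₁}^{2i} = ω_{a₂}^{2i} = ω_{a₁}¹‖W₁(:,i)‖²`,
`ω_{a₁}^{3i} = ω_{a₁}^{2i}‖W₂‖²`, `ω_{a₂}¹ = ω_{d_{2i}}¹ = ‖W₃‖²`,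
`ω_{d_{1i}}¹ = |K̂^e|_∞²(ω_{a₁}^{2i}+ω_{a₁}^{3i})`, `ω_{d_{2i}}² = |K̂^e|_∞²ω_{a₁}^{2i}`,
`ω_{q_i} = |K̂^e|_∞²ω_{a₂}¹`, `D_{d_{1i}}¹ = D_{d_{2i}}² = I`. -/
def JeS : ℝ :=
  (1 / (N : ℝ)) *
    ((∑ n, (P.sRes A n) ^ 2)
      + P.w3sq * P.w2sq * wSq (P.Da1_1sq A) (P.Ra1 A)
      + (∑ i, P.w3sq * P.w2sq * P.w1colSq i * wSq (P.Da1_2sq A i) (P.Ra1 A))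
      + (∑ i, P.w3sq * P.w2sq * P.w1colSq i * P.w2sq * wSq (P.Da1_3sq A i) (P.Ra1 A))
      + P.w3sq * wSq (P.Da2_1sq A) (P.Ra2 A)
      + (∑ i, P.w3sq * P.w2sq * P.w1colSq i * wSq (P.Da2_2sq A i) (P.Ra2 A))
      + (∑ i, nsup P.Khat ^ 2 *
          (P.w3sq * P.w2sq * P.w1colSq i + P.w3sq * P.w2sq * P.w1colSq i * P.w2sq) *
          froSq (P.Rd1 A i))
      + (∑ i, P.w3sq * P.w2sq * wSq (P.Dd1_2sq A i) (P.Rd1 A i))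
      + (∑ i, P.w3sq * wSq (P.Dd2_1sq A i) (P.Rd2 A i))
      + (∑ i, nsup P.Khat ^ 2 * (P.w3sq * P.w2sq * P.w1colSq i) * froSq (P.Rd2 A i))
      + (∑ i, nsup P.Khat ^ 2 * P.w3sq * froSq (P.Rq A i)))

/-- canonical auxiliary variable `a₁ = W₁X + b₁𝟙ᵀ` -/
def cA1 : Fin M → Fin N → ℝ := fun j n => (∑ i, P.W1 j i * P.X i n) + P.b1 j

/-- canonical auxiliary variable `a₂ = W₂σ(a₁) + b₂𝟙ᵀ` -/
def cA2 : Fin M → Fin N → ℝ := fun j n => (∑ k, P.W2 j k * P.σ (P.cA1 k n)) + P.b2 j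

/-- canonical auxiliary variable `d_{1i} = W₁(:,i)𝟙ᵀ` -/
def cD1 (i : Fin d) : Fin M → Fin N → ℝ := fun j _ => P.W1 j i

/-- canonical auxiliary variable `d_{2i} = W₂(σ'(a₁)*d_{1i})` -/
def cD2 (i : Fin d) : Fin M → Fin N → ℝ :=
  fun j n => ∑ k, P.W2 j k * (P.σ' (P.cA1 k n) * P.W1 k i)

/-- canonical auxiliary variable `q_i = W₂(σ''(a₁)*d_{1i}*d_{1i})` -/
def cQ (i : Fin d) : Fin M → Fin N → ℝ :=
  fun j n => ∑ k, P.W2 j k * (P.σ'' (P.cA1 k n) * P.W1 k i * P.W1 k i)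

/-- the canonical auxiliary variables -/
def canonAux : EllAux d M N := ⟨P.cA1, P.cA2, P.cD1, P.cD2, P.cQ⟩

end EllData

/- ===== Auxiliary machinery for the proof ===== -/

section PdCalc

variable {m : ℕ} {f g : (Fin m → ℝ) → ℝ} {x : Fin m → ℝ} {i : Fin m}

lemma pd_congr' {f g : (Fin m → ℝ) → ℝ} (h : ∀ y, f y = g y) : pd f i x = pd g i x := by
  rw [funext h]

lemma pd_add (hf : DifferentiableAt ℝ f x) (hg : DifferentiableAt ℝ g x) :
    pd (fun y => f y + g y) i x = pd f i x + pd g i x := by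
  simp [pd, fderiv_fun_add hf hg]

lemma pd_add_const (a : ℝ) :
    pd (fun y => f y + a) i x = pd f i x := by
  simp [pd, fderiv_add_const]

lemma pd_sub_const (a : ℝ) :
    pd (fun y => f y - a) i x = pd f i x := by
  simp [pd, fderiv_sub_const]

lemma pd_mul (hf : DifferentiableAt ℝ f x) (hg : DifferentiableAt ℝ g x) :
    pd (fun y => f y * g y) i x = pd f i x * g x + f x * pd g i x := by
  simp [pd, fderiv_fun_mul hf hg]; ring

lemma pd_const_mul (a : ℝ) (hf : DifferentiableAt ℝ f x) :
    pd (fun y => a * f y) i x = a * pd f i x := by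
  simp [pd, fderiv_const_mul hf]

lemma pd_mul_const (a : ℝ) (hf : DifferentiableAt ℝ f x) :
    pd (fun y => f y * a) i x = pd f i x * a := by
  rw [pd, fderiv_mul_const hf, ContinuousLinearMap.smul_apply, smul_eq_mul, mul_comm a]
  rfl

lemma pd_sum {ι : Type*} (s : Finset ι) (F : ι → (Fin m → ℝ) → ℝ)
    (hF : ∀ l ∈ s, DifferentiableAt ℝ (F l) x) :
    pd (fun y => ∑ l ∈ s, F l y) i x = ∑ l ∈ s, pd (F l) i x := by
  simp [pd, fderiv_fun_sum hF]

lemma fderiv_real_apply (gg : ℝ → ℝ) (z a : ℝ) : fderiv ℝ gg z a = a * deriv gg z := by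
  rw [show a = a • (1:ℝ) by simp, map_smul, fderiv_apply_one_eq_deriv]; simp

lemma pd_comp (gg : ℝ → ℝ) (hg : DifferentiableAt ℝ gg (f x)) (hf : DifferentiableAt ℝ f x) :
    pd (fun y => gg (f y)) i x = deriv gg (f x) * pd f i x := by
  rw [pd, show (fun y => gg (f y)) = gg ∘ f from rfl, fderiv_comp x hg hf,
    ContinuousLinearMap.comp_apply, fderiv_real_apply]
  rw [pd, mul_comm]

lemma diff_coord (l : Fin m) : Differentiable ℝ (fun y : Fin m → ℝ => y l) :=
  (ContinuousLinearMap.proj l : (Fin m → ℝ) →L[ℝ] ℝ).differentiable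

lemma pd_coord (l : Fin m) :
    pd (fun y => y l) i x = Pi.single (M := fun _ : Fin m => ℝ) i 1 l := by
  rw [pd, show (fun y : Fin m → ℝ => y l) = ⇑(ContinuousLinearMap.proj l : (Fin m → ℝ) →L[ℝ] ℝ)
    from rfl, ContinuousLinearMap.fderiv]
  rfl

end PdCalc

lemma wSq_zero {M N : ℕ} (Dsq : Fin N → ℝ) (A : Fin M → Fin N → ℝ) (h : ∀ j n, A j n = 0) :
    wSq Dsq A = 0 := by
  simp [wSq, colSq, h]

lemma froSq_zero {M N : ℕ} (A : Fin M → Fin N → ℝ) (h : ∀ j n, A j n = 0) :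
    froSq A = 0 := by
  simp [froSq, colSq, h]

lemma alg_identity (d : ℕ) (cc T φv : ℝ) (X dc D DD : Fin d → ℝ) :
    2 * ((d : ℝ) * cc + ∑ i, X i * dc i) * φv
      + (∑ i, (4 * X i * cc + dc i * T) * D i)
      + (cc * T) * ∑ i, DD i
    = ∑ i, (dc i * (2 * X i * φv + T * D i)
        + cc * (2 * φv + 4 * X i * D i + T * DD i)) := by
  have h : ∀ i : Fin d, dc i * (2 * X i * φv + T * D i)
      + cc * (2 * φv + 4 * X i * D i + T * DD i)
      = (X i * dc i) * (2 * φv) + cc * (2 * φv)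
        + (4 * X i * cc + dc i * T) * D i + (cc * T) * DD i := fun i => by ring
  simp only [h, Finset.sum_add_distrib, ← Finset.sum_mul, ← Finset.mul_sum, Finset.sum_const,
    Finset.card_fin, nsmul_eq_mul]
  ring

namespace EllData

variable {d M N : ℕ} (P : EllData d M N)

/-- first hidden pre-activation as a function of the input -/
def Hf (k : Fin M) (y : Fin d → ℝ) : ℝ := (∑ i, P.W1 k i * y i) + P.b1 k

/-- second hidden pre-activation as a function of the input -/
def Gf (j : Fin M) (y : Fin d → ℝ) : ℝ := (∑ k, P.W2 j k * P.σ (P.Hf k y)) + P.b2 j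

/-- `∂_i` of `Gf` -/
def D2f (i : Fin d) (j : Fin M) (y : Fin d → ℝ) : ℝ :=
  ∑ k, P.W2 j k * (P.σ' (P.Hf k y) * P.W1 k i)

/-- `∂_i²`-auxiliary of `Gf` -/
def Qf (i : Fin d) (j : Fin M) (y : Fin d → ℝ) : ℝ :=
  ∑ k, P.W2 j k * (P.σ'' (P.Hf k y) * P.W1 k i * P.W1 k i)

/-- `∂_i φ` -/
def PhiD (i : Fin d) (y : Fin d → ℝ) : ℝ := ∑ j, P.W3 j * (P.σ' (P.Gf j y) * P.D2f i j y)

/-- `∂_i² φ` -/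
def PhiDD (i : Fin d) (y : Fin d → ℝ) : ℝ :=
  ∑ j, P.W3 j *
    (P.σ'' (P.Gf j y) * P.D2f i j y * P.D2f i j y + P.σ' (P.Gf j y) * P.Qf i j y)

/-- `∂_i ψ_e` as an explicit function -/
def PsiD (i : Fin d) (y : Fin d → ℝ) : ℝ :=
  2 * y i * P.phi y + ((∑ l, (y l) ^ 2) - 1) * P.PhiD i y

section Derivs

lemma Hf_diff (k : Fin M) : Differentiable ℝ (P.Hf k) := by
  unfold Hf
  exact (Differentiable.fun_sum fun l _ => ((diff_coord l).const_mul _)).add_const _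

lemma pd_Hf (k : Fin M) (i : Fin d) (y : Fin d → ℝ) : pd (P.Hf k) i y = P.W1 k i := by
  unfold Hf
  rw [show (fun y : Fin d → ℝ => (∑ l, P.W1 k l * y l) + P.b1 k)
      = fun y : Fin d → ℝ => (fun y : Fin d → ℝ =>
          ∑ l, (fun l (y : Fin d → ℝ) => P.W1 k l * y l) l y) y + P.b1 k from rfl,
    pd_add_const,
    pd_sum Finset.univ (fun l (y : Fin d → ℝ) => P.W1 k l * y l)
      (fun l _ => ((diff_coord l).differentiableAt).const_mul _)]
  simp [pd_const_mul _ ((diff_coord _).differentiableAt), pd_coord, Pi.single_apply, mul_ite]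

lemma Ssq_diff : Differentiable ℝ (fun y : Fin d → ℝ => ∑ l, (y l) ^ 2) :=
  Differentiable.fun_sum fun l _ => (diff_coord l).pow 2

lemma pd_Ssq {d : ℕ} (i : Fin d) (y : Fin d → ℝ) :
    pd (fun y : Fin d → ℝ => ∑ l, (y l) ^ 2) i y = 2 * y i := by
  rw [show (fun y : Fin d → ℝ => ∑ l, (y l) ^ 2)
      = fun y : Fin d → ℝ => ∑ l, (fun l (y : Fin d → ℝ) => (y l) ^ 2) l y from rfl,
    pd_sum Finset.univ (fun l (y : Fin d → ℝ) => (y l) ^ 2)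
      (fun l _ => ((diff_coord l).pow 2).differentiableAt)]
  have h : ∀ l : Fin d, pd (fun y : Fin d → ℝ => (y l) ^ 2) i y
      = 2 * y l * Pi.single (M := fun _ : Fin d => ℝ) i 1 l := by
    intro l
    have h0 := pd_comp (f := fun y : Fin d → ℝ => y l) (i := i) (x := y)
      (fun t : ℝ => t ^ 2) (by fun_prop) ((diff_coord l).differentiableAt)
    rw [pd_coord] at h0
    simpa using h0
  simp [h, Pi.single_apply, mul_ite]

lemma phi_eq : P.phi = fun y => (∑ j, P.W3 j * P.σ (P.Gf j y)) + P.b3 := rfl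

lemma psiE_eq : P.psiE = fun y => ((∑ l, (y l) ^ 2) - 1) * P.phi y := rfl

variable (hσ : ContDiff ℝ 2 P.σ)
include hσ

lemma sigma_diff : Differentiable ℝ P.σ := hσ.differentiable (by norm_num)

lemma sigma'_diff : Differentiable ℝ P.σ' := by
  have h2 : ContDiff ℝ ((1:ℕ∞)+1) P.σ := by exact_mod_cast hσ
  exact (contDiff_succ_iff_deriv.mp h2).2.2.differentiable (by norm_num)

lemma sHf_diff (k : Fin M) : Differentiable ℝ (fun y => P.σ (P.Hf k y)) :=
  (P.sigma_diff hσ).comp (P.Hf_diff k)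

lemma pd_sHf (k : Fin M) (i : Fin d) (y : Fin d → ℝ) :
    pd (fun y => P.σ (P.Hf k y)) i y = P.σ' (P.Hf k y) * P.W1 k i := by
  rw [pd_comp _ ((P.sigma_diff hσ).differentiableAt) ((P.Hf_diff k).differentiableAt), pd_Hf]
  rfl

lemma s'Hf_diff (k : Fin M) : Differentiable ℝ (fun y => P.σ' (P.Hf k y)) :=
  (P.sigma'_diff hσ).comp (P.Hf_diff k)

lemma pd_s'Hf (k : Fin M) (i : Fin d) (y : Fin d → ℝ) :
    pd (fun y => P.σ' (P.Hf k y)) i y = P.σ'' (P.Hf k y) * P.W1 k i := by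
  rw [pd_comp _ ((P.sigma'_diff hσ).differentiableAt) ((P.Hf_diff k).differentiableAt), pd_Hf]
  rfl

lemma Gf_diff (j : Fin M) : Differentiable ℝ (P.Gf j) := by
  unfold Gf
  exact (Differentiable.fun_sum fun k _ => ((P.sHf_diff hσ k).const_mul _)).add_const _

lemma pd_Gf (j : Fin M) (i : Fin d) (y : Fin d → ℝ) : pd (P.Gf j) i y = P.D2f i j y := by
  unfold Gf D2f
  rw [show (fun y : Fin d → ℝ => (∑ k, P.W2 j k * P.σ (P.Hf k y)) + P.b2 j)
      = fun y : Fin d → ℝ => (fun y : Fin d → ℝ =>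
          ∑ k, (fun k (y : Fin d → ℝ) => P.W2 j k * P.σ (P.Hf k y)) k y) y + P.b2 j from rfl,
    pd_add_const,
    pd_sum Finset.univ (fun k (y : Fin d → ℝ) => P.W2 j k * P.σ (P.Hf k y))
      (fun k _ => ((P.sHf_diff hσ k).differentiableAt).const_mul _)]
  exact Finset.sum_congr rfl fun k _ => by
    rw [pd_const_mul _ ((P.sHf_diff hσ k).differentiableAt), pd_sHf P hσ]

lemma sGf_diff (j : Fin M) : Differentiable ℝ (fun y => P.σ (P.Gf j y)) :=
  (P.sigma_diff hσ).comp (P.Gf_diff hσ j)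

lemma s'Gf_diff (j : Fin M) : Differentiable ℝ (fun y => P.σ' (P.Gf j y)) :=
  (P.sigma'_diff hσ).comp (P.Gf_diff hσ j)

lemma pd_s'Gf (j : Fin M) (i : Fin d) (y : Fin d → ℝ) :
    pd (fun y => P.σ' (P.Gf j y)) i y = P.σ'' (P.Gf j y) * P.D2f i j y := by
  rw [pd_comp _ ((P.sigma'_diff hσ).differentiableAt) ((P.Gf_diff hσ j).differentiableAt),
    pd_Gf P hσ]
  rfl

lemma D2f_diff (i : Fin d) (j : Fin M) : Differentiable ℝ (P.D2f i j) := by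
  unfold D2f
  exact Differentiable.fun_sum fun k _ =>
    (((P.s'Hf_diff hσ k).mul_const _).const_mul _)

lemma pd_D2f (i : Fin d) (j : Fin M) (y : Fin d → ℝ) :
    pd (P.D2f i j) i y = P.Qf i j y := by
  unfold D2f Qf
  rw [show (fun y : Fin d → ℝ => ∑ k, P.W2 j k * (P.σ' (P.Hf k y) * P.W1 k i))
      = fun y : Fin d → ℝ =>
          ∑ k, (fun k (y : Fin d → ℝ) => P.W2 j k * (P.σ' (P.Hf k y) * P.W1 k i)) k y from rfl,
    pd_sum Finset.univ (fun k (y : Fin d → ℝ) => P.W2 j k * (P.σ' (P.Hf k y) * P.W1 k i))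
      (fun k _ => (((P.s'Hf_diff hσ k).mul_const _).const_mul _).differentiableAt)]
  refine Finset.sum_congr rfl fun k _ => ?_
  rw [pd_const_mul _ (((P.s'Hf_diff hσ k).mul_const _).differentiableAt),
    pd_mul_const _ ((P.s'Hf_diff hσ k).differentiableAt), pd_s'Hf P hσ]

lemma PhiD_diff (i : Fin d) : Differentiable ℝ (P.PhiD i) := by
  unfold PhiD
  exact Differentiable.fun_sum fun j _ =>
    (((P.s'Gf_diff hσ j).mul (P.D2f_diff hσ i j)).const_mul _)

lemma pd_PhiD (i : Fin d) (y : Fin d → ℝ) : pd (P.PhiD i) i y = P.PhiDD i y := by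
  unfold PhiD PhiDD
  rw [show (fun y : Fin d → ℝ => ∑ j, P.W3 j * (P.σ' (P.Gf j y) * P.D2f i j y))
      = fun y : Fin d → ℝ =>
          ∑ j, (fun j (y : Fin d → ℝ) => P.W3 j * (P.σ' (P.Gf j y) * P.D2f i j y)) j y from rfl,
    pd_sum Finset.univ (fun j (y : Fin d → ℝ) => P.W3 j * (P.σ' (P.Gf j y) * P.D2f i j y))
      (fun j _ => (((P.s'Gf_diff hσ j).mul (P.D2f_diff hσ i j)).const_mul _).differentiableAt)]
  refine Finset.sum_congr rfl fun j _ => ?_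
  rw [pd_const_mul _ (((P.s'Gf_diff hσ j).fun_mul (P.D2f_diff hσ i j)).differentiableAt),
    pd_mul ((P.s'Gf_diff hσ j).differentiableAt) ((P.D2f_diff hσ i j).differentiableAt),
    pd_s'Gf P hσ, pd_D2f P hσ]

lemma phi_diff : Differentiable ℝ P.phi := by
  rw [P.phi_eq]
  exact (Differentiable.fun_sum fun j _ => ((P.sGf_diff hσ j).const_mul _)).add_const _

lemma pd_phi (i : Fin d) (y : Fin d → ℝ) : pd P.phi i y = P.PhiD i y := by
  rw [P.phi_eq]
  unfold PhiD
  rw [show (fun y : Fin d → ℝ => (∑ j, P.W3 j * P.σ (P.Gf j y)) + P.b3)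
      = fun y : Fin d → ℝ => (fun y : Fin d → ℝ =>
          ∑ j, (fun j (y : Fin d → ℝ) => P.W3 j * P.σ (P.Gf j y)) j y) y + P.b3 from rfl,
    pd_add_const,
    pd_sum Finset.univ (fun j (y : Fin d → ℝ) => P.W3 j * P.σ (P.Gf j y))
      (fun j _ => ((P.sGf_diff hσ j).differentiableAt).const_mul _)]
  refine Finset.sum_congr rfl fun j _ => ?_
  rw [pd_const_mul _ ((P.sGf_diff hσ j).differentiableAt),
    pd_comp _ ((P.sigma_diff hσ).differentiableAt) ((P.Gf_diff hσ j).differentiableAt),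
    pd_Gf P hσ]
  rfl

lemma pd_psiE (i : Fin d) (y : Fin d → ℝ) : pd P.psiE i y = P.PsiD i y := by
  rw [P.psiE_eq]
  rw [show (fun y : Fin d → ℝ => ((∑ l, (y l) ^ 2) - 1) * P.phi y)
      = fun y : Fin d → ℝ =>
        (fun y : Fin d → ℝ => (∑ l, (y l) ^ 2) - 1) y * P.phi y from rfl,
    pd_mul ((Ssq_diff).sub_const _).differentiableAt ((P.phi_diff hσ).differentiableAt)]
  rw [show (fun y : Fin d → ℝ => (∑ l, (y l) ^ 2) - 1)
      = fun y : Fin d → ℝ => (fun y : Fin d → ℝ => ∑ l, (y l) ^ 2) y - 1 from rfl,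
    pd_sub_const, pd_Ssq, pd_phi P hσ]
  unfold PsiD
  ring

lemma PsiD_diff (i : Fin d) : Differentiable ℝ (P.PsiD i) := by
  unfold PsiD
  exact (((diff_coord i).const_mul 2).mul (P.phi_diff hσ)).add
    (((Ssq_diff).sub_const 1).mul (P.PhiD_diff hσ i))

lemma pd_PsiD (i : Fin d) (y : Fin d → ℝ) :
    pd (P.PsiD i) i y
      = 2 * P.phi y + 4 * y i * P.PhiD i y + ((∑ l, (y l) ^ 2) - 1) * P.PhiDD i y := by
  unfold PsiD
  have d1 : DifferentiableAt ℝ (fun y : Fin d → ℝ => 2 * y i) y :=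
    ((diff_coord i).const_mul 2).differentiableAt
  have d2 : DifferentiableAt ℝ (fun y : Fin d → ℝ => 2 * y i * P.phi y) y :=
    d1.mul ((P.phi_diff hσ).differentiableAt)
  have d3 : DifferentiableAt ℝ (fun y : Fin d → ℝ => (∑ l, (y l) ^ 2) - 1) y :=
    ((Ssq_diff).sub_const _).differentiableAt
  have d4 : DifferentiableAt ℝ
      (fun y : Fin d → ℝ => ((∑ l, (y l) ^ 2) - 1) * P.PhiD i y) y :=
    d3.mul ((P.PhiD_diff hσ i).differentiableAt)
  rw [show (fun y : Fin d → ℝ => 2 * y i * P.phi y + ((∑ l, (y l) ^ 2) - 1) * P.PhiD i y)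
      = fun y : Fin d → ℝ => (fun y : Fin d → ℝ => 2 * y i * P.phi y) y
        + (fun y : Fin d → ℝ => ((∑ l, (y l) ^ 2) - 1) * P.PhiD i y) y from rfl,
    pd_add d2 d4,
    pd_mul d1 ((P.phi_diff hσ).differentiableAt),
    pd_mul d3 ((P.PhiD_diff hσ i).differentiableAt),
    pd_const_mul _ ((diff_coord i).differentiableAt), pd_coord,
    show (fun y : Fin d → ℝ => (∑ l, (y l) ^ 2) - 1)
      = fun y : Fin d → ℝ => (fun y : Fin d → ℝ => ∑ l, (y l) ^ 2) y - 1 from rfl,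
    pd_sub_const, pd_Ssq, pd_phi P hσ, pd_PhiD P hσ]
  simp [Pi.single_eq_same]
  ring

end Derivs

end EllData


/-- Equality of the LySep and PINN losses at the canonical auxiliary variables
(the construction proving Theorem 2.2): with `a₁ = W₁X+b₁𝟙ᵀ`, `a₂ = W₂σ(a₁)+b₂𝟙ᵀ`,
`d_{1i} = W₁(:,i)𝟙ᵀ`, `d_{2i} = W₂(σ'(a₁)*d_{1i})`, `q_i = W₂(σ''(a₁)*d_{1i}*d_{1i})`,
every penalty term of `J^e_S` vanishes, the LySep residual equals the PINN residual,
and consequently `J^e_S = J^e`. -/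
theorem elliptic_lysep_canonical_equality
    {d M N : ℕ} (hd : 0 < d) (hM : 0 < M) (hN : 0 < N)
    (P : EllData d M N)
    (hσ : ContDiff ℝ 2 P.σ) (hc : ContDiff ℝ 1 P.c) :
    (∀ j n, P.Ra1 P.canonAux j n = 0) ∧
    (∀ j n, P.Ra2 P.canonAux j n = 0) ∧
    (∀ i j n, P.Rd1 P.canonAux i j n = 0) ∧
    (∀ i j n, P.Rd2 P.canonAux i j n = 0) ∧
    (∀ i j n, P.Rq P.canonAux i j n = 0) ∧
    (∀ n, P.sRes P.canonAux n = P.pinnRes n) ∧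
    P.JeS P.canonAux = P.Je := by
  have hcdiff : Differentiable ℝ P.c := hc.differentiable (by norm_num)
  have hRa1 : ∀ j n, P.Ra1 P.canonAux j n = 0 := by
    intro j n; simp [EllData.Ra1, EllData.canonAux, EllData.cA1]
  have hRa2 : ∀ j n, P.Ra2 P.canonAux j n = 0 := by
    intro j n; simp [EllData.Ra2, EllData.canonAux, EllData.cA2]
  have hRd1 : ∀ i j n, P.Rd1 P.canonAux i j n = 0 := by
    intro i j n; simp [EllData.Rd1, EllData.canonAux, EllData.cD1]
  have hRd2 : ∀ i j n, P.Rd2 P.canonAux i j n = 0 := by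
    intro i j n; simp [EllData.Rd2, EllData.canonAux, EllData.cD1, EllData.cD2]
  have hRq : ∀ i j n, P.Rq P.canonAux i j n = 0 := by
    intro i j n; simp [EllData.Rq, EllData.canonAux, EllData.cD1, EllData.cQ]
  have hres : ∀ n, P.sRes P.canonAux n = P.pinnRes n := by
    intro n
    have hterm : ∀ i : Fin d,
        pd (fun y => P.c y * pd P.psiE i y) i (P.x n)
        = P.dcX i n * (2 * P.X i n * P.phi (P.x n) + (P.Xhat n - 1) * P.PhiD i (P.x n))
          + P.cX n * (2 * P.phi (P.x n) + 4 * P.X i n * P.PhiD i (P.x n)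
            + (P.Xhat n - 1) * P.PhiDD i (P.x n)) := by
      intro i
      rw [pd_congr' (fun y => by rw [P.pd_psiE hσ i y]),
        pd_mul (hcdiff.differentiableAt) ((P.PsiD_diff hσ i).differentiableAt),
        P.pd_PsiD hσ i]
      rfl
    have hpinn : P.pinnRes n
        = (∑ i, (P.dcX i n * (2 * P.X i n * P.phi (P.x n)
              + (P.Xhat n - 1) * P.PhiD i (P.x n))
            + P.cX n * (2 * P.phi (P.x n) + 4 * P.X i n * P.PhiD i (P.x n)
              + (P.Xhat n - 1) * P.PhiDD i (P.x n)))) - P.Y n := by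
      unfold EllData.pinnRes
      rw [Finset.sum_congr rfl fun i _ => hterm i]
    have hsres : P.sRes P.canonAux n
        = 2 * ((d : ℝ) * P.cX n + ∑ i, P.X i n * P.dcX i n) * P.phi (P.x n)
          + (∑ i, (4 * P.X i n * P.cX n + P.dcX i n * (P.Xhat n - 1)) * P.PhiD i (P.x n))
          + (P.cX n * (P.Xhat n - 1)) * (∑ i, P.PhiDD i (P.x n))
          - P.Y n := rfl
    rw [hsres, hpinn]
    congr 1
    exact alg_identity d (P.cX n) (P.Xhat n - 1) (P.phi (P.x n)) (fun i => P.X i n)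
      (fun i => P.dcX i n) (fun i => P.PhiD i (P.x n)) (fun i => P.PhiDD i (P.x n))
  refine ⟨hRa1, hRa2, hRd1, hRd2, hRq, hres, ?_⟩
  have e1 : wSq (P.Da1_1sq P.canonAux) (P.Ra1 P.canonAux) = 0 := wSq_zero _ _ hRa1
  have e2 : ∀ i, wSq (P.Da1_2sq P.canonAux i) (P.Ra1 P.canonAux) = 0 := fun _ => wSq_zero _ _ hRa1
  have e3 : ∀ i, wSq (P.Da1_3sq P.canonAux i) (P.Ra1 P.canonAux) = 0 := fun _ => wSq_zero _ _ hRa1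
  have e4 : wSq (P.Da2_1sq P.canonAux) (P.Ra2 P.canonAux) = 0 := wSq_zero _ _ hRa2
  have e5 : ∀ i, wSq (P.Da2_2sq P.canonAux i) (P.Ra2 P.canonAux) = 0 := fun _ => wSq_zero _ _ hRa2
  have e6 : ∀ i, froSq (P.Rd1 P.canonAux i) = 0 := fun i => froSq_zero _ (hRd1 i)
  have e7 : ∀ i, wSq (P.Dd1_2sq P.canonAux i) (P.Rd1 P.canonAux i) = 0 :=
    fun i => wSq_zero _ _ (hRd1 i)
  have e8 : ∀ i, wSq (P.Dd2_1sq P.canonAux i) (P.Rd2 P.canonAux i) = 0 :=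
    fun i => wSq_zero _ _ (hRd2 i)
  have e9 : ∀ i, froSq (P.Rd2 P.canonAux i) = 0 := fun i => froSq_zero _ (hRd2 i)
  have e10 : ∀ i, froSq (P.Rq P.canonAux i) = 0 := fun i => froSq_zero _ (hRq i)
  unfold EllData.JeS EllData.Je
  simp only [hres, e1, e2, e3, e4, e5, e6, e7, e8, e9, e10, mul_zero, zero_mul,
    Finset.sum_const_zero, add_zero, zero_add]
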